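/- For every positive integer i, let G_i be the full join of a path P on i² vertices and an independent set A on i vertices. Then χ^ℓ_{fan,2}(G_i) ≤ 2, i.e., for every 2-list assignment L of G_i there is an L-coloring with no monochromatic fan on more than 2 vertices. -/

import Mathlib

/-- The full join of a path on `i²` vertices and an independent set on `i` vertices. -/
def fullJoinPathIndep (i : ℕ) : SimpleGraph (Fin (i ^ 2) ⊕ Fin i) where
  Adj x y :=
    match x, y with
    | .inl a, .inl b => (a : ℕ) + 1 = b ∨ (b : ℕ) + 1 = a
    | .inl _, .inr _ => True
    | .inr _, .inl _ => True
    | .inr _, .inr _ => False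
  symm := by constructor; rintro (a | a) (b | b) h <;> simp_all <;> tauto
  loopless := by constructor; rintro (a | a) h <;> simp_all

/-- Greedy list coloring of a path: each vertex avoids the previous vertex's color. -/
def greedy (L' : ℕ → Finset ℕ) (h : ∀ n, 2 ≤ (L' n).card) : ℕ → ℕ
  | 0 => (L' 0).min' (Finset.card_pos.mp (by have := h 0; omega))
  | n + 1 => ((L' (n + 1)).erase (greedy L' h n)).min' (by
      obtain ⟨b, hb, hbne⟩ := Finset.exists_mem_ne
        (s := L' (n + 1)) (by have := h (n + 1); omega) (greedy L' h n)
      exact ⟨b, Finset.mem_erase.mpr ⟨hbne, hb⟩⟩)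

lemma greedy_mem (L' : ℕ → Finset ℕ) (h : ∀ n, 2 ≤ (L' n).card) (n : ℕ) :
    greedy L' h n ∈ L' n := by
  cases n with
  | zero => exact Finset.min'_mem _ _
  | succ k =>
      have : greedy L' h (k + 1) ∈ (L' (k + 1)).erase (greedy L' h k) := by
        rw [greedy]; exact Finset.min'_mem _ _
      exact Finset.mem_of_mem_erase this

lemma greedy_ne (L' : ℕ → Finset ℕ) (h : ∀ n, 2 ≤ (L' n).card) (n : ℕ) :
    greedy L' h (n + 1) ≠ greedy L' h n := by
  have : greedy L' h (n + 1) ∈ (L' (n + 1)).erase (greedy L' h n) := by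
    rw [greedy]; exact Finset.min'_mem _ _
  exact (Finset.mem_erase.mp this).1

/-- `χ^ℓ_{fan,2}(G_i) ≤ 2`: for every 2-list assignment `L` of the full join
`G_i` of a path on `i²` vertices with an independent set on `i` vertices, there is an
`L`-coloring with no monochromatic fan on more than 2 vertices (a fan with `m ≥ 2` path
vertices has `m + 1 ≥ 3` vertices). -/
theorem stmt_1 (i : ℕ) (hi : 1 ≤ i)
    (L : Fin (i ^ 2) ⊕ Fin i → Finset ℕ) (hL : ∀ v, 2 ≤ (L v).card) :
    ∃ φ : Fin (i ^ 2) ⊕ Fin i → ℕ, (∀ v, φ v ∈ L v) ∧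
      ∀ m : ℕ, 2 ≤ m →
        ¬ ∃ (u : Fin (i ^ 2) ⊕ Fin i) (v : Fin m → Fin (i ^ 2) ⊕ Fin i),
            Function.Injective v ∧ (∀ j, v j ≠ u) ∧
            (∀ j, (fullJoinPathIndep i).Adj u (v j)) ∧
            (∀ j k : Fin m, (j : ℕ) + 1 = (k : ℕ) → (fullJoinPathIndep i).Adj (v j) (v k)) ∧
            (∀ j, φ (v j) = φ u) := by
  classical
  set L' : ℕ → Finset ℕ := fun n => if h : n < i ^ 2 then L (Sum.inl ⟨n, h⟩) else {0, 1}
    with hL'def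
  have hL' : ∀ n, 2 ≤ (L' n).card := by
    intro n
    by_cases h : n < i ^ 2
    · simp only [hL'def, dif_pos h]; exact hL _
    · simp only [hL'def, dif_neg h]; simp
  set φ : Fin (i ^ 2) ⊕ Fin i → ℕ :=
    Sum.elim (fun a => greedy L' hL' a.val)
      (fun b => (L (Sum.inr b)).min' (Finset.card_pos.mp (by have := hL (Sum.inr b); omega)))
    with hφdef
  have hφinl : ∀ a : Fin (i ^ 2), φ (Sum.inl a) = greedy L' hL' a.val := fun a => rfl
  -- key: consecutive path vertices get different colors
  have key : ∀ a b : Fin (i ^ 2), ((a : ℕ) + 1 = b ∨ (b : ℕ) + 1 = a) →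
      greedy L' hL' a.val ≠ greedy L' hL' b.val := by
    rintro a b (h | h) heq
    · exact greedy_ne L' hL' a.val (by rw [h]; exact heq.symm)
    · exact greedy_ne L' hL' b.val (by rw [h]; exact heq)
  refine ⟨φ, ?_, ?_⟩
  · rintro (a | b)
    · have h := greedy_mem L' hL' a.val
      have he : L' a.val = L (Sum.inl ⟨a.val, a.isLt⟩) := dif_pos a.isLt
      rw [he] at h
      simpa [hφinl] using h
    · exact Finset.min'_mem _ _
  · intro m hm ⟨u, v, hinj, hne, hadj, hpath, hcol⟩
    set j0 : Fin m := ⟨0, by omega⟩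
    set j1 : Fin m := ⟨1, by omega⟩
    have hadj01 : (fullJoinPathIndep i).Adj (v j0) (v j1) := hpath j0 j1 rfl
    have hc0 := hcol j0
    have hc1 := hcol j1
    have hadj0 := hadj j0
    have hadj1 := hadj j1
    -- case analysis
    rcases hu : u with c | c <;> rcases h0 : v j0 with a | a <;> rcases h1 : v j1 with b | b <;>
        rw [hu] at hadj0 hadj1 hc0 hc1 <;> rw [h0] at hadj0 hadj01 hc0 <;>
        rw [h1] at hadj1 hadj01 hc1
    · -- u = inl c, v0 = inl a, v1 = inl b : edge v0 v1 monochromatic... use u-v0 edge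
      exact key c a (by simpa [fullJoinPathIndep] using hadj0) hc0.symm
    · -- u = inl c, v0 = inl a, v1 = inr b : edge u v0
      exact key c a (by simpa [fullJoinPathIndep] using hadj0) hc0.symm
    · -- u = inl c, v0 = inr a, v1 = inl b : edge u v1
      exact key c b (by simpa [fullJoinPathIndep] using hadj1) hc1.symm
    · -- v0, v1 both inr : not adjacent
      simp [fullJoinPathIndep] at hadj01
    · -- u = inr, v0 = inl a, v1 = inl b : edge v0 v1
      exact key a b (by simpa [fullJoinPathIndep] using hadj01)
        (hc0.trans hc1.symm)
    · -- u = inr, v1 = inr : not adjacent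
      simp [fullJoinPathIndep] at hadj1
    · simp [fullJoinPathIndep] at hadj0
    · simp [fullJoinPathIndep] at hadj0
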